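/- arXiv:1310.2872 — 4 statements merged into one kernel-verified Lean document; each statement's English description precedes it below -/
import Mathlib

section
/- Let G be a finite simple graph on vertex set {x_{11}, …, x_{n1}}, let m_1, …, m_n ≥ 2 be integers, and let G_1, …, G_n be connected finite simple graphs with V(G_i) = {x_{i1}, …, x_{im_i}}. If G_i is vertex decomposable and x_{i1} is a shedding vertex of G_i for every i = 1, …, n, then the attachment graph G(G_1, …, G_n) is vertex decomposable. -/
variable {V : Type*} [DecidableEq V]

/-- `S` is an independent set of the induced subgraph of `G` on the vertex set `A`. -/
def IsIndepIn (G : SimpleGraph V) (A S : Finset V) : Prop :=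
  S ⊆ A ∧ ∀ u ∈ S, ∀ v ∈ S, ¬G.Adj u v

/-- `S` is a maximal independent set of the induced subgraph of `G` on the vertex set `A`. -/
def IsMaxIndepIn (G : SimpleGraph V) (A S : Finset V) : Prop :=
  IsIndepIn G A S ∧ ∀ T, IsIndepIn G A T → S ⊆ T → S = T

/-- The induced subgraph of `G` on `A` is unmixed: all maximal independent sets
have the same cardinality. -/
def UnmixedOn (G : SimpleGraph V) (A : Finset V) : Prop :=
  ∀ S T, IsMaxIndepIn G A S → IsMaxIndepIn G A T → S.card = T.card

open scoped Classical in
/-- The vertex set `A \ N_G[x]`. -/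
noncomputable def delClosedNbhd (G : SimpleGraph V) (A : Finset V) (x : V) : Finset V :=
  A.filter fun y => y ≠ x ∧ ¬G.Adj x y

/-- The induced subgraph of `G` on `A` is vertex decomposable. -/
inductive VertexDecomposableOn (G : SimpleGraph V) : Finset V → Prop
  | edgeless (A : Finset V) (h : ∀ u ∈ A, ∀ v ∈ A, ¬G.Adj u v) : VertexDecomposableOn G A
  | shed (A : Finset V) (x : V) (hx : x ∈ A)
      (hlink : VertexDecomposableOn G (delClosedNbhd G A x))
      (hdel : VertexDecomposableOn G (A.erase x))
      (hexch : ∀ S, IsIndepIn G (delClosedNbhd G A x) S →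
        ∃ y ∈ A, G.Adj x y ∧ IsIndepIn G (A.erase x) (insert y S)) :
      VertexDecomposableOn G A

/-- `x` is a shedding vertex of the induced subgraph of `G` on `A`. -/
def IsSheddingVertexOn (G : SimpleGraph V) (A : Finset V) (x : V) : Prop :=
  x ∈ A ∧
  VertexDecomposableOn G (delClosedNbhd G A x) ∧
  VertexDecomposableOn G (A.erase x) ∧
  ∀ S, IsIndepIn G (delClosedNbhd G A x) S →
    ∃ y ∈ A, G.Adj x y ∧ IsIndepIn G (A.erase x) (insert y S)

/-- The independence complex of the induced subgraph of `G` on `A` is shellable: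
there is an ordering `F 0, F 1, …` of its facets (the maximal independent sets) such
that for every `i`, every face of the subcomplex `(⋃ j < i, ⟨F j⟩) ∩ ⟨F i⟩` is contained
in a face of that subcomplex of cardinality `(F i).card - 1` (i.e. the subcomplex is
pure of dimension `dim (F i) - 1`). -/
def ShellableOn (G : SimpleGraph V) (A : Finset V) : Prop :=
  ∃ (t : ℕ) (F : Fin t → Finset V),
    Function.Injective F ∧
    (∀ S, IsMaxIndepIn G A S ↔ ∃ i, F i = S) ∧
    ∀ i : Fin t, ∀ S : Finset V, S ⊆ F i → (∃ j, j < i ∧ S ⊆ F j) →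
      ∃ S' : Finset V, S ⊆ S' ∧ S' ⊆ F i ∧ (∃ j, j < i ∧ S' ⊆ F j) ∧
        S'.card = (F i).card - 1

/-- A graph is chordal if every cycle of length at least four has a chord, i.e. an
edge of the graph joining two vertices of the cycle that is not an edge of the cycle. -/
def IsChordal (G : SimpleGraph V) : Prop :=
  ∀ (x : V) (w : G.Walk x x), w.IsCycle → 4 ≤ w.length →
    ∃ u v, u ∈ w.support ∧ v ∈ w.support ∧ G.Adj u v ∧ s(u, v) ∉ w.edges

/-- The induced subgraph of `G` on `A` is a cycle graph on `m` vertices. -/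
def IsCycleGraphOn (G : SimpleGraph V) (A : Finset V) (m : ℕ) : Prop :=
  (∀ u v, G.Adj u v → u ∈ A ∧ v ∈ A) ∧
  Nonempty (G.induce (A : Set V) ≃g SimpleGraph.cycleGraph m)

/-- The independence number of the induced subgraph of `G` on `A`. -/
noncomputable def indepNumOn (G : SimpleGraph V) (A : Finset V) : ℕ :=
  sSup {k | ∃ S, IsIndepIn G A S ∧ S.card = k}


section AuxLemmas

lemma mem_delClosedNbhd' {G : SimpleGraph V} {A : Finset V} {x y : V} :
    y ∈ delClosedNbhd G A x ↔ y ∈ A ∧ y ≠ x ∧ ¬G.Adj x y := by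
  simp [delClosedNbhd]

lemma delClosedNbhd_subset_erase (G : SimpleGraph V) (A : Finset V) (x : V) :
    delClosedNbhd G A x ⊆ A.erase x := by
  intro y hy
  rw [mem_delClosedNbhd'] at hy
  exact Finset.mem_erase.2 ⟨hy.2.1, hy.1⟩

lemma delClosedNbhd_subset (G : SimpleGraph V) (A : Finset V) (x : V) :
    delClosedNbhd G A x ⊆ A :=
  (delClosedNbhd_subset_erase G A x).trans (Finset.erase_subset _ _)

lemma indep_insert {G : SimpleGraph V} {A S : Finset V} {y : V}
    (hSA : S ⊆ A) (hyA : y ∈ A)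
    (hS : ∀ u ∈ S, ∀ v ∈ S, ¬G.Adj u v)
    (hy : ∀ u ∈ S, ¬G.Adj y u) :
    IsIndepIn G A (insert y S) := by
  refine ⟨Finset.insert_subset hyA hSA, ?_⟩
  intro u hu v hv h
  rcases Finset.mem_insert.1 hu with rfl | hu1 <;> rcases Finset.mem_insert.1 hv with rfl | hv1
  · exact G.irrefl h
  · exact hy v hv1 h
  · exact hy u hu1 h.symm
  · exact hS u hu1 v hv1 h

lemma VertexDecomposableOn.congr {G G' : SimpleGraph V} {A : Finset V}
    (h : VertexDecomposableOn G A) :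
    (∀ u ∈ A, ∀ v ∈ A, (G.Adj u v ↔ G'.Adj u v)) → VertexDecomposableOn G' A := by
  induction h with
  | edgeless A h =>
    intro hagree
    exact .edgeless A fun u hu v hv hadj => h u hu v hv ((hagree u hu v hv).2 hadj)
  | shed A z hz hlink hdel hexch ihlink ihdel =>
    intro hagree
    have hsubA : delClosedNbhd G A z ⊆ A := delClosedNbhd_subset G A z
    have hdelEq : delClosedNbhd G A z = delClosedNbhd G' A z := by
      ext y
      rw [mem_delClosedNbhd', mem_delClosedNbhd']
      constructor
      · rintro ⟨h1, h2, h3⟩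
        exact ⟨h1, h2, fun h => h3 ((hagree z hz y h1).2 h)⟩
      · rintro ⟨h1, h2, h3⟩
        exact ⟨h1, h2, fun h => h3 ((hagree z hz y h1).1 h)⟩
    refine .shed A z hz ?_ ?_ ?_
    · rw [← hdelEq]
      exact ihlink fun u hu v hv => hagree u (hsubA hu) v (hsubA hv)
    · exact ihdel fun u hu v hv =>
        hagree u (Finset.erase_subset _ _ hu) v (Finset.erase_subset _ _ hv)
    · intro S hS
      rw [← hdelEq] at hS
      have hS' : IsIndepIn G (delClosedNbhd G A z) S :=
        ⟨hS.1, fun u hu v hv h => hS.2 u hu v hv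
          ((hagree u (hsubA (hS.1 hu)) v (hsubA (hS.1 hv))).1 h)⟩
      obtain ⟨y, hyA, hyadj, hind⟩ := hexch S hS'
      refine ⟨y, hyA, (hagree z hz y hyA).1 hyadj, hind.1, ?_⟩
      intro u hu v hv h
      exact hind.2 u hu v hv
        ((hagree u (Finset.erase_subset _ _ (hind.1 hu)) v
          (Finset.erase_subset _ _ (hind.1 hv))).2 h)

lemma vd_union_aux {G : SimpleGraph V} {C : Finset V} (hC : VertexDecomposableOn G C) :
    ∀ A : Finset V, (∀ u ∈ A, ∀ v ∈ A, ¬G.Adj u v) → Disjoint A C →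
      (∀ u ∈ A, ∀ v ∈ C, ¬G.Adj u v) → VertexDecomposableOn G (A ∪ C) := by
  induction hC with
  | edgeless C hC =>
    intro A hA hdisj hAC
    refine .edgeless _ fun u hu v hv => ?_
    rcases Finset.mem_union.1 hu with hu | hu <;> rcases Finset.mem_union.1 hv with hv | hv
    · exact hA u hu v hv
    · exact hAC u hu v hv
    · exact fun h => hAC v hv u hu h.symm
    · exact hC u hu v hv
  | shed C z hz hlink hdel hexch ihlink ihdel =>
    intro A hA hdisj hAC
    have hzA : z ∉ A := fun h => Finset.disjoint_left.1 hdisj h hz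
    have hCsub : delClosedNbhd G C z ⊆ C := delClosedNbhd_subset G C z
    have hdelEq : delClosedNbhd G (A ∪ C) z = A ∪ delClosedNbhd G C z := by
      ext y
      simp only [mem_delClosedNbhd', Finset.mem_union]
      constructor
      · rintro ⟨h1 | h1, h2, h3⟩
        · exact Or.inl h1
        · exact Or.inr ⟨h1, h2, h3⟩
      · rintro (h1 | ⟨h1, h2, h3⟩)
        · exact ⟨Or.inl h1, fun hh => hzA (hh ▸ h1), fun hh => hAC y h1 z hz hh.symm⟩
        · exact ⟨Or.inr h1, h2, h3⟩
    have heraseEq : (A ∪ C).erase z = A ∪ C.erase z := by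
      rw [Finset.erase_union_distrib, Finset.erase_eq_of_notMem hzA]
    refine .shed _ z (Finset.mem_union_right _ hz) ?_ ?_ ?_
    · rw [hdelEq]
      exact ihlink A hA (hdisj.mono_right hCsub) fun u hu v hv => hAC u hu v (hCsub hv)
    · rw [heraseEq]
      exact ihdel A hA (hdisj.mono_right (Finset.erase_subset _ _))
        fun u hu v hv => hAC u hu v (Finset.erase_subset _ _ hv)
    · intro S hS
      classical
      rw [hdelEq] at hS
      set S₀ := S.filter (· ∈ delClosedNbhd G C z) with hS₀def
      have hS₀indep : IsIndepIn G (delClosedNbhd G C z) S₀ :=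
        ⟨fun u hu => (Finset.mem_filter.1 hu).2,
         fun u hu v hv => hS.2 u (Finset.filter_subset _ _ hu) v (Finset.filter_subset _ _ hv)⟩
      obtain ⟨y, hyC, hyadj, hind⟩ := hexch S₀ hS₀indep
      have hyCe : y ∈ C.erase z := hind.1 (Finset.mem_insert_self _ _)
      refine ⟨y, Finset.mem_union_right _ hyC, hyadj, ?_⟩
      rw [heraseEq]
      refine indep_insert ?_ (Finset.mem_union_right _ hyCe) hS.2 ?_
      · intro u hu
        rcases Finset.mem_union.1 (hS.1 hu) with h | h
        · exact Finset.mem_union_left _ h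
        · exact Finset.mem_union_right _ (delClosedNbhd_subset_erase _ _ _ h)
      · intro u hu
        rcases Finset.mem_union.1 (hS.1 hu) with h | h
        · exact fun hadj => hAC u h y hyC hadj.symm
        · have hu₀ : u ∈ S₀ := Finset.mem_filter.2 ⟨hu, h⟩
          exact fun hadj =>
            hind.2 y (Finset.mem_insert_self _ _) u (Finset.mem_insert_of_mem hu₀) hadj

lemma vd_union {G : SimpleGraph V} {A : Finset V} (hA : VertexDecomposableOn G A) :
    ∀ C : Finset V, VertexDecomposableOn G C → Disjoint A C →
      (∀ u ∈ A, ∀ v ∈ C, ¬G.Adj u v) → VertexDecomposableOn G (A ∪ C) := by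
  induction hA with
  | edgeless A hA =>
    intro C hC hdisj hAC
    exact vd_union_aux hC A hA hdisj hAC
  | shed A z hz hlink hdel hexch ihlink ihdel =>
    intro C hC hdisj hAC
    have hzC : z ∉ C := fun h => Finset.disjoint_right.1 hdisj h hz
    have hAsub : delClosedNbhd G A z ⊆ A := delClosedNbhd_subset G A z
    have hdelEq : delClosedNbhd G (A ∪ C) z = delClosedNbhd G A z ∪ C := by
      ext y
      simp only [mem_delClosedNbhd', Finset.mem_union]
      constructor
      · rintro ⟨h1 | h1, h2, h3⟩
        · exact Or.inl ⟨h1, h2, h3⟩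
        · exact Or.inr h1
      · rintro (⟨h1, h2, h3⟩ | h1)
        · exact ⟨Or.inl h1, h2, h3⟩
        · exact ⟨Or.inr h1, fun hh => hzC (hh ▸ h1), hAC z hz y h1⟩
    have heraseEq : (A ∪ C).erase z = A.erase z ∪ C := by
      rw [Finset.erase_union_distrib, Finset.erase_eq_of_notMem hzC]
    refine .shed _ z (Finset.mem_union_left _ hz) ?_ ?_ ?_
    · rw [hdelEq]
      exact ihlink C hC (hdisj.mono_left hAsub) fun u hu v hv => hAC u (hAsub hu) v hv
    · rw [heraseEq]
      exact ihdel C hC (hdisj.mono_left (Finset.erase_subset _ _))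
        fun u hu v hv => hAC u (Finset.erase_subset _ _ hu) v hv
    · intro S hS
      classical
      rw [hdelEq] at hS
      set S₀ := S.filter (· ∈ delClosedNbhd G A z) with hS₀def
      have hS₀indep : IsIndepIn G (delClosedNbhd G A z) S₀ :=
        ⟨fun u hu => (Finset.mem_filter.1 hu).2,
         fun u hu v hv => hS.2 u (Finset.filter_subset _ _ hu) v (Finset.filter_subset _ _ hv)⟩
      obtain ⟨y, hyA, hyadj, hind⟩ := hexch S₀ hS₀indep
      have hyAe : y ∈ A.erase z := hind.1 (Finset.mem_insert_self _ _)
      refine ⟨y, Finset.mem_union_left _ hyA, hyadj, ?_⟩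
      rw [heraseEq]
      refine indep_insert ?_ (Finset.mem_union_left _ hyAe) hS.2 ?_
      · intro u hu
        rcases Finset.mem_union.1 (hS.1 hu) with h | h
        · exact Finset.mem_union_left _ (delClosedNbhd_subset_erase _ _ _ h)
        · exact Finset.mem_union_right _ h
      · intro u hu
        rcases Finset.mem_union.1 (hS.1 hu) with h | h
        · have hu₀ : u ∈ S₀ := Finset.mem_filter.2 ⟨hu, h⟩
          exact fun hadj =>
            hind.2 y (Finset.mem_insert_self _ _) u (Finset.mem_insert_of_mem hu₀) hadj
        · exact fun hadj => hAC y (Finset.mem_of_mem_erase hyAe) u h hadj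

end AuxLemmas

lemma attach_key {n : ℕ} (x : Fin n → V) (B : Fin n → Finset V)
    (G : SimpleGraph V) (Gs : Fin n → SimpleGraph V)
    (hGsupp : ∀ u v, G.Adj u v → (∃ i, u = x i) ∧ (∃ j, v = x j))
    (hxB : ∀ i, x i ∈ B i)
    (hBdisj : ∀ i j, i ≠ j → Disjoint (B i) (B j))
    (hGssupp : ∀ i, ∀ u v, (Gs i).Adj u v → u ∈ B i ∧ v ∈ B i)
    (hshed : ∀ i, IsSheddingVertexOn (Gs i) (B i) (x i)) :
    ∀ N : ℕ, ∀ s t : Finset (Fin n), s.card ≤ N → Disjoint s t →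
      VertexDecomposableOn (G ⊔ ⨆ i, Gs i)
        (s.biUnion B ∪ t.biUnion fun j => (B j).erase (x j)) := by
  classical
  set H := G ⊔ ⨆ i, Gs i with hHdef
  have huniq : ∀ {u : V} {i j : Fin n}, u ∈ B i → u ∈ B j → i = j := by
    intro u i j hi hj
    by_contra h
    exact Finset.disjoint_left.1 (hBdisj i j h) hi hj
  have hHadj : ∀ u v, H.Adj u v ↔ G.Adj u v ∨ ∃ k, (Gs k).Adj u v := by
    intro u v
    simp [hHdef, SimpleGraph.sup_adj, SimpleGraph.iSup_adj]
  have hGsAdjH : ∀ i, ∀ u v, (Gs i).Adj u v → H.Adj u v := by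
    intro i u v h
    exact (hHadj u v).2 (Or.inr ⟨i, h⟩)
  have hagree : ∀ i, ∀ u ∈ B i, ∀ v ∈ B i, (H.Adj u v ↔ (Gs i).Adj u v) := by
    intro i u hu v hv
    rw [hHadj]
    constructor
    · rintro (h | ⟨k, h⟩)
      · obtain ⟨⟨a, rfl⟩, ⟨b, rfl⟩⟩ := hGsupp _ _ h
        have ha : a = i := huniq (hxB a) hu
        have hb : b = i := huniq (hxB b) hv
        subst ha; subst hb
        exact absurd h G.irrefl
      · obtain ⟨hu', hv'⟩ := hGssupp k _ _ h
        exact huniq hu' hu ▸ h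
    · exact fun h => Or.inr ⟨i, h⟩
  have hcross : ∀ i j, i ≠ j → ∀ u ∈ B i, ∀ v ∈ B j, H.Adj u v →
      u = x i ∧ v = x j ∧ G.Adj u v := by
    intro i j hij u hu v hv h
    rw [hHadj] at h
    rcases h with h | ⟨k, h⟩
    · obtain ⟨⟨a, rfl⟩, ⟨b, rfl⟩⟩ := hGsupp _ _ h
      exact ⟨congrArg x (huniq (hxB a) hu), congrArg x (huniq (hxB b) hv), h⟩
    · obtain ⟨hu', hv'⟩ := hGssupp k _ _ h
      exact absurd ((huniq hu' hu).symm.trans (huniq hv' hv)) hij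
  have hnoedge : ∀ i j, i ≠ j → ∀ u ∈ (B i).erase (x i), ∀ v ∈ B j, ¬H.Adj u v := by
    intro i j hij u hu v hv h
    exact Finset.ne_of_mem_erase hu (hcross i j hij u (Finset.mem_of_mem_erase hu) v hv h).1
  have hneXi : ∀ i j, j ≠ i → ∀ y ∈ B j, y ≠ x i := by
    intro i j hj y hy hyx
    subst hyx
    exact hj (huniq hy (hxB i))
  intro N
  induction N with
  | zero =>
    intro s t hcard hst
    have hs : s = ∅ := Finset.card_eq_zero.1 (Nat.le_zero.1 hcard)
    subst hs
    clear hcard hst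
    simp only [Finset.biUnion_empty, Finset.empty_union]
    induction t using Finset.induction_on with
    | empty => exact .edgeless _ (by simp)
    | @insert a t' ha ih =>
      rw [Finset.biUnion_insert]
      refine vd_union ((hshed a).2.2.1.congr ?_) _ ih ?_ ?_
      · intro u hu v hv
        exact (hagree a u (Finset.mem_of_mem_erase hu) v (Finset.mem_of_mem_erase hv)).symm
      · rw [Finset.disjoint_biUnion_right]
        intro j hj
        exact (hBdisj a j fun h => ha (h ▸ hj)).mono
          (Finset.erase_subset _ _) (Finset.erase_subset _ _)
      · intro u hu v hv
        obtain ⟨j, hj, hv'⟩ := Finset.mem_biUnion.1 hv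
        exact hnoedge a j (fun h => ha (h ▸ hj)) u hu v (Finset.mem_of_mem_erase hv')
  | succ N ih =>
    intro s t hcard hst
    rcases s.eq_empty_or_nonempty with rfl | ⟨i, hi⟩
    · exact ih ∅ t (by simp) hst
    set s' := s.erase i with hs'def
    set s₁ := s'.filter (fun j => ¬ G.Adj (x i) (x j)) with hs₁def
    set s₂ := s'.filter (fun j => G.Adj (x i) (x j)) with hs₂def
    set D := delClosedNbhd (Gs i) (B i) (x i) with hDdef
    have hs'card : s'.card ≤ N := by
      rw [hs'def, Finset.card_erase_of_mem hi]
      omega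
    have hiT : i ∉ t := Finset.disjoint_left.1 hst hi
    have hs'sub : s' ⊆ s := Finset.erase_subset _ _
    have hs'ne : ∀ j ∈ s', j ≠ i := fun j hj => Finset.ne_of_mem_erase hj
    have hDsub : D ⊆ (B i).erase (x i) := delClosedNbhd_subset_erase _ _ _
    have hDB : D ⊆ B i := delClosedNbhd_subset _ _ _
    -- every vertex of the "rest" part lies in a block B j with j ≠ i
    have hrest : ∀ y ∈ s₁.biUnion B ∪ (s₂ ∪ t).biUnion (fun j => (B j).erase (x j)),
        ∃ j, j ≠ i ∧ y ∈ B j := by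
      intro y hy
      rcases Finset.mem_union.1 hy with hy | hy
      · obtain ⟨j, hj, hyj⟩ := Finset.mem_biUnion.1 hy
        exact ⟨j, hs'ne j (Finset.mem_of_mem_filter _ hj), hyj⟩
      · obtain ⟨j, hj, hyj⟩ := Finset.mem_biUnion.1 hy
        rcases Finset.mem_union.1 hj with hj | hj
        · exact ⟨j, hs'ne j (Finset.mem_of_mem_filter _ hj), Finset.mem_of_mem_erase hyj⟩
        · exact ⟨j, fun h => hiT (h ▸ hj), Finset.mem_of_mem_erase hyj⟩
    have hdelEq : delClosedNbhd H (s.biUnion B ∪ t.biUnion fun j => (B j).erase (x j)) (x i)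
        = D ∪ (s₁.biUnion B ∪ (s₂ ∪ t).biUnion fun j => (B j).erase (x j)) := by
      ext y
      rw [mem_delClosedNbhd']
      constructor
      · rintro ⟨hy, hyne, hyadj⟩
        rcases Finset.mem_union.1 hy with hy | hy
        · obtain ⟨j, hjs, hyBj⟩ := Finset.mem_biUnion.1 hy
          by_cases hji : j = i
          · subst hji
            exact Finset.mem_union_left _
              (mem_delClosedNbhd'.2 ⟨hyBj, hyne, fun h => hyadj (hGsAdjH j _ _ h)⟩)
          · have hjs' : j ∈ s' := Finset.mem_erase.2 ⟨hji, hjs⟩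
            by_cases hadj : G.Adj (x i) (x j)
            · refine Finset.mem_union_right _ (Finset.mem_union_right _
                (Finset.mem_biUnion.2 ⟨j, Finset.mem_union_left _
                  (Finset.mem_filter.2 ⟨hjs', hadj⟩), Finset.mem_erase.2 ⟨?_, hyBj⟩⟩))
              rintro rfl
              exact hyadj ((hHadj _ _).2 (Or.inl hadj))
            · exact Finset.mem_union_right _ (Finset.mem_union_left _
                (Finset.mem_biUnion.2 ⟨j, Finset.mem_filter.2 ⟨hjs', hadj⟩, hyBj⟩))
        · obtain ⟨j, hjt, hyej⟩ := Finset.mem_biUnion.1 hy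
          exact Finset.mem_union_right _ (Finset.mem_union_right _
            (Finset.mem_biUnion.2 ⟨j, Finset.mem_union_right _ hjt, hyej⟩))
      · intro hy
        rcases Finset.mem_union.1 hy with hy | hy
        · have hyB := hDB hy
          rw [mem_delClosedNbhd'] at hy
          refine ⟨Finset.mem_union_left _ (Finset.mem_biUnion.2 ⟨i, hi, hyB⟩), hy.2.1, ?_⟩
          intro h
          exact hy.2.2 ((hagree i (x i) (hxB i) y hyB).1 h)
        · obtain ⟨j, hji, hyBj⟩ := hrest y hy
          have hyne : y ≠ x i := hneXi i j hji y hyBj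
          have hnoadj : ¬H.Adj (x i) y := by
            intro h
            obtain ⟨-, hyx, hG⟩ := hcross i j (fun h' => hji h'.symm) (x i) (hxB i) y hyBj h
            rcases Finset.mem_union.1 hy with hy | hy
            · obtain ⟨k, hk, hyk⟩ := Finset.mem_biUnion.1 hy
              have hkj : k = j := huniq hyk hyBj
              subst hkj
              exact (Finset.mem_filter.1 hk).2 (hyx ▸ hG)
            · obtain ⟨k, hk, hyk⟩ := Finset.mem_biUnion.1 hy
              have hkj : k = j := huniq (Finset.mem_of_mem_erase hyk) hyBj
              subst hkj
              exact Finset.ne_of_mem_erase hyk hyx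
          refine ⟨?_, hyne, hnoadj⟩
          rcases Finset.mem_union.1 hy with hy | hy
          · obtain ⟨k, hk, hyk⟩ := Finset.mem_biUnion.1 hy
            exact Finset.mem_union_left _
              (Finset.mem_biUnion.2 ⟨k, hs'sub (Finset.mem_of_mem_filter _ hk), hyk⟩)
          · obtain ⟨k, hk, hyk⟩ := Finset.mem_biUnion.1 hy
            rcases Finset.mem_union.1 hk with hk | hk
            · exact Finset.mem_union_left _ (Finset.mem_biUnion.2
                ⟨k, hs'sub (Finset.mem_of_mem_filter _ hk), Finset.mem_of_mem_erase hyk⟩)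
            · exact Finset.mem_union_right _ (Finset.mem_biUnion.2 ⟨k, hk, hyk⟩)
    have heraseEq : (s.biUnion B ∪ t.biUnion fun j => (B j).erase (x j)).erase (x i)
        = s'.biUnion B ∪ (insert i t).biUnion fun j => (B j).erase (x j) := by
      ext y
      rw [Finset.mem_erase]
      constructor
      · rintro ⟨hne, hy⟩
        rcases Finset.mem_union.1 hy with hy | hy
        · obtain ⟨j, hjs, hyBj⟩ := Finset.mem_biUnion.1 hy
          by_cases hji : j = i
          · subst hji
            exact Finset.mem_union_right _ (Finset.mem_biUnion.2
              ⟨j, Finset.mem_insert_self _ _, Finset.mem_erase.2 ⟨hne, hyBj⟩⟩)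
          · exact Finset.mem_union_left _ (Finset.mem_biUnion.2
              ⟨j, Finset.mem_erase.2 ⟨hji, hjs⟩, hyBj⟩)
        · obtain ⟨j, hjt, hyej⟩ := Finset.mem_biUnion.1 hy
          exact Finset.mem_union_right _ (Finset.mem_biUnion.2
            ⟨j, Finset.mem_insert_of_mem hjt, hyej⟩)
      · intro hy
        rcases Finset.mem_union.1 hy with hy | hy
        · obtain ⟨j, hj, hyBj⟩ := Finset.mem_biUnion.1 hy
          exact ⟨hneXi i j (hs'ne j hj) y hyBj,
            Finset.mem_union_left _ (Finset.mem_biUnion.2 ⟨j, hs'sub hj, hyBj⟩)⟩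
        · obtain ⟨j, hj, hyej⟩ := Finset.mem_biUnion.1 hy
          rcases Finset.mem_insert.1 hj with rfl | hj
          · exact ⟨Finset.ne_of_mem_erase hyej,
              Finset.mem_union_left _ (Finset.mem_biUnion.2
                ⟨j, hi, Finset.mem_of_mem_erase hyej⟩)⟩
          · exact ⟨hneXi i j (fun h => hiT (h ▸ hj)) y (Finset.mem_of_mem_erase hyej),
              Finset.mem_union_right _ (Finset.mem_biUnion.2 ⟨j, hj, hyej⟩)⟩
    refine VertexDecomposableOn.shed _ (x i)
      (Finset.mem_union_left _ (Finset.mem_biUnion.2 ⟨i, hi, hxB i⟩)) ?_ ?_ ?_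
    · rw [hdelEq]
      refine vd_union ((hshed i).2.1.congr ?_) _ ?_ ?_ ?_
      · intro u hu v hv
        exact (hagree i u (hDB hu) v (hDB hv)).symm
      · refine ih s₁ (s₂ ∪ t) ((Finset.card_le_card (Finset.filter_subset _ _)).trans hs'card) ?_
        rw [Finset.disjoint_union_right]
        constructor
        · rw [Finset.disjoint_left]
          intro j hj hj'
          exact (Finset.mem_filter.1 hj).2 (Finset.mem_filter.1 hj').2
        · exact hst.mono_left ((Finset.filter_subset _ _).trans hs'sub)
      · rw [Finset.disjoint_left]
        intro y hy hy'
        obtain ⟨j, hji, hyBj⟩ := hrest y hy'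
        exact hji (huniq hyBj (hDB hy))
      · intro u hu v hv
        obtain ⟨j, hji, hvBj⟩ := hrest v hv
        exact hnoedge i j (fun h => hji h.symm) u (hDsub hu) v hvBj
    · rw [heraseEq]
      refine ih s' (insert i t) hs'card ?_
      rw [Finset.disjoint_insert_right]
      exact ⟨Finset.notMem_erase _ _, hst.mono_left hs'sub⟩
    · intro S hS
      have hSsub : ∀ u ∈ S, u ∈ D ∨ ∃ j, j ≠ i ∧ u ∈ B j := by
        intro u hu
        have := hS.1 hu
        rw [hdelEq] at this
        rcases Finset.mem_union.1 this with h | h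
        · exact Or.inl h
        · exact Or.inr (hrest u h)
      set S₀ := S.filter (· ∈ D) with hS₀def
      have hS₀indep : IsIndepIn (Gs i) D S₀ := by
        refine ⟨fun u hu => (Finset.mem_filter.1 hu).2, ?_⟩
        intro u hu v hv h
        exact hS.2 u (Finset.filter_subset _ _ hu) v (Finset.filter_subset _ _ hv)
          (hGsAdjH i _ _ h)
      obtain ⟨y, hyB, hyadj, hind⟩ := (hshed i).2.2.2 S₀ hS₀indep
      have hyE : y ∈ (B i).erase (x i) := hind.1 (Finset.mem_insert_self _ _)
      refine ⟨y, Finset.mem_union_left _ (Finset.mem_biUnion.2 ⟨i, hi, hyB⟩),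
        hGsAdjH i _ _ hyadj, ?_⟩
      refine indep_insert ?_ ?_ hS.2 ?_
      · intro u hu
        exact delClosedNbhd_subset_erase _ _ _ (hS.1 hu)
      · exact Finset.mem_erase.2 ⟨Finset.ne_of_mem_erase hyE,
          Finset.mem_union_left _ (Finset.mem_biUnion.2 ⟨i, hi, hyB⟩)⟩
      · intro u hu
        rcases hSsub u hu with h | ⟨j, hji, huBj⟩
        · have hu₀ : u ∈ S₀ := Finset.mem_filter.2 ⟨hu, h⟩
          intro hadj
          exact hind.2 y (Finset.mem_insert_self _ _) u (Finset.mem_insert_of_mem hu₀)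
            ((hagree i y hyB u (hDB h)).1 hadj)
        · exact hnoedge i j (fun h => hji h.symm) y hyE u huBj

/-- If each `Gs i` is vertex decomposable and `x i` is a shedding vertex of
`Gs i`, then the attachment graph `G(G_1, …, G_n)` is vertex decomposable. -/
theorem stmt_0 {V : Type*} [DecidableEq V] (n : ℕ) (x : Fin n → V) (B : Fin n → Finset V)
    (G : SimpleGraph V) (Gs : Fin n → SimpleGraph V)
    -- `x` lists the vertices of `G`, which are pairwise distinct
    (hxinj : Function.Injective x)
    -- the edges of `G` join vertices of `G`
    (hGsupp : ∀ u v, G.Adj u v → (∃ i, u = x i) ∧ (∃ j, v = x j))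
    -- `B i` is the vertex set of `Gs i`; it contains `x i` and has at least two vertices
    (hxB : ∀ i, x i ∈ B i)
    (hBcard : ∀ i, 2 ≤ (B i).card)
    -- the vertex sets `B i` are pairwise disjoint
    (hBdisj : ∀ i j, i ≠ j → Disjoint (B i) (B j))
    -- the edges of `Gs i` join vertices of `Gs i`
    (hGssupp : ∀ i, ∀ u v, (Gs i).Adj u v → u ∈ B i ∧ v ∈ B i)
    -- each `Gs i` is connected
    (hconn : ∀ i, ((Gs i).induce ((B i : Set V))).Connected)
    -- each `Gs i` is vertex decomposable and `x i` is a shedding vertex of `Gs i`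
    (hvd : ∀ i, VertexDecomposableOn (Gs i) (B i))
    (hshed : ∀ i, IsSheddingVertexOn (Gs i) (B i) (x i)) :
    VertexDecomposableOn (G ⊔ ⨆ i, Gs i) (Finset.univ.biUnion B) := by
  have h := attach_key x B G Gs hGsupp hxB hBdisj hGssupp hshed n Finset.univ ∅
    (by simp) (Finset.disjoint_empty_right _)
  simpa using h
end

section
/- Let G be a finite simple graph on vertex set {x_{11}, …, x_{n1}}, let m_1, …, m_n ≥ 2 be integers, and let G_1, …, G_n be connected finite simple graphs with V(G_i) = {x_{i1}, …, x_{im_i}}, and let G' = G(G_1, …, G_n). Suppose that x_{11} satisfies the exchange condition in G_1, i.e., for every independent set C of G_1 \ N_{G_1}[x_{11}] there exists y ∈ N_{G_1}(x_{11}) with C ∪ {y} independent in G_1 \ {x_{11}}. Then x_{11} satisfies the exchange condition in G': for every independent set A of G' \ N_{G'}[x_{11}] there exists y ∈ N_{G'}(x_{11}) such that A ∪ {y} is independent in G' \ {x_{11}}. -/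
variable {V : Type*} [DecidableEq V]

/-- If `x i₀` satisfies the exchange condition in `Gs i₀`, then it satisfies
the exchange condition in the attachment graph `G(G_1, …, G_n)`. -/
theorem stmt_2 {V : Type*} [DecidableEq V] (n : ℕ) (x : Fin n → V) (B : Fin n → Finset V)
    (G : SimpleGraph V) (Gs : Fin n → SimpleGraph V)
    (hxinj : Function.Injective x)
    (hGsupp : ∀ u v, G.Adj u v → (∃ i, u = x i) ∧ (∃ j, v = x j))
    (hxB : ∀ i, x i ∈ B i)
    (hBcard : ∀ i, 2 ≤ (B i).card)
    (hBdisj : ∀ i j, i ≠ j → Disjoint (B i) (B j))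
    (hGssupp : ∀ i, ∀ u v, (Gs i).Adj u v → u ∈ B i ∧ v ∈ B i)
    (hconn : ∀ i, ((Gs i).induce ((B i : Set V))).Connected)
    (i₀ : Fin n)
    -- `x i₀` satisfies the exchange condition in `Gs i₀`
    (hexch : ∀ C, IsIndepIn (Gs i₀) (delClosedNbhd (Gs i₀) (B i₀) (x i₀)) C →
      ∃ y ∈ B i₀, (Gs i₀).Adj (x i₀) y ∧
        IsIndepIn (Gs i₀) ((B i₀).erase (x i₀)) (insert y C)) :
    -- `x i₀` satisfies the exchange condition in the attachment graph
    ∀ A, IsIndepIn (G ⊔ ⨆ i, Gs i)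
        (delClosedNbhd (G ⊔ ⨆ i, Gs i) (Finset.univ.biUnion B) (x i₀)) A →
      ∃ y ∈ Finset.univ.biUnion B, (G ⊔ ⨆ i, Gs i).Adj (x i₀) y ∧
        IsIndepIn (G ⊔ ⨆ i, Gs i) ((Finset.univ.biUnion B).erase (x i₀)) (insert y A) := by
  classical
  intro A hA
  obtain ⟨hAsub, hAind⟩ := hA
  have hle : ∀ i, Gs i ≤ G ⊔ ⨆ i, Gs i := fun i => le_sup_of_le_right (le_iSup _ i)
  have hadj : ∀ u v, (G ⊔ ⨆ i, Gs i).Adj u v ↔ G.Adj u v ∨ ∃ i, (Gs i).Adj u v := by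
    intro u v; simp
  set C := A.filter (· ∈ B i₀) with hC
  have hCsub : IsIndepIn (Gs i₀) (delClosedNbhd (Gs i₀) (B i₀) (x i₀)) C := by
    constructor
    · intro u hu
      simp only [hC, Finset.mem_filter] at hu
      obtain ⟨huA, huB⟩ := hu
      have h2 := hAsub huA
      simp only [delClosedNbhd, Finset.mem_filter] at h2 ⊢
      exact ⟨huB, h2.2.1, fun h => h2.2.2 (hle i₀ h)⟩
    · intro u hu v hv h
      exact hAind u (Finset.mem_of_mem_filter u hu) v (Finset.mem_of_mem_filter v hv)
        (hle i₀ h)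
  obtain ⟨y, hyB, hyadj, hins⟩ := hexch C hCsub
  obtain ⟨hins_sub, hins_ind⟩ := hins
  have hyne : y ≠ x i₀ := by
    have := hins_sub (Finset.mem_insert_self y C)
    exact (Finset.mem_erase.mp this).1
  refine ⟨y, Finset.mem_biUnion.mpr ⟨i₀, Finset.mem_univ _, hyB⟩, hle i₀ hyadj, ?_, ?_⟩
  · intro u hu
    rcases Finset.mem_insert.mp hu with rfl | huA
    · exact Finset.mem_erase.mpr ⟨hyne, Finset.mem_biUnion.mpr ⟨i₀, Finset.mem_univ _, hyB⟩⟩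
    · have h2 := hAsub huA
      simp only [delClosedNbhd, Finset.mem_filter] at h2
      exact Finset.mem_erase.mpr ⟨h2.2.1, h2.1⟩
  · -- independence of insert y A in G'
    have key : ∀ v ∈ A, ¬(G ⊔ ⨆ i, Gs i).Adj y v := by
      intro v hvA h
      rcases (hadj y v).mp h with hG | ⟨j, hj⟩
      · obtain ⟨⟨j, rfl⟩, _⟩ := hGsupp _ _ hG
        have : j = i₀ := by
          by_contra hne
          simpa using (hBdisj j i₀ hne).le_bot (Finset.mem_inter.mpr ⟨hxB j, hyB⟩)
        exact hyne (by rw [this])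
      · have hyj : y ∈ B j := (hGssupp j _ _ hj).1
        have hvj : v ∈ B j := (hGssupp j _ _ hj).2
        have hji : j = i₀ := by
          by_contra hne
          simpa using (hBdisj j i₀ hne).le_bot (Finset.mem_inter.mpr ⟨hyj, hyB⟩)
        subst hji
        have hvC : v ∈ C := Finset.mem_filter.mpr ⟨hvA, hvj⟩
        exact hins_ind y (Finset.mem_insert_self y C) v (Finset.mem_insert_of_mem hvC) hj
    intro u hu v hv h
    rcases Finset.mem_insert.mp hu with rfl | huA
    · rcases Finset.mem_insert.mp hv with rfl | hvA
      · exact (G ⊔ ⨆ i, Gs i).irrefl h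
      · exact key v hvA h
    · rcases Finset.mem_insert.mp hv with rfl | hvA
      · exact key u huA h.symm
      · exact hAind u huA v hvA h
end

section
/- Let G be a finite simple graph on vertex set {x_{11}, …, x_{n1}}, let m_1, …, m_n ≥ 2 be integers, and let G_1, …, G_n be connected finite simple graphs with V(G_i) = {x_{i1}, …, x_{im_i}}. If the attachment graph G(G_1, …, G_n) is shellable, then G_i is shellable for every i = 1, …, n. -/
variable {V : Type*} [DecidableEq V]

lemma exists_maxIndep_extend (G : SimpleGraph V) (A S : Finset V) (h : IsIndepIn G A S) :
    ∃ T, S ⊆ T ∧ IsMaxIndepIn G A T := by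
  classical
  have hne : (A.powerset.filter (fun T => IsIndepIn G A T ∧ S ⊆ T)).Nonempty :=
    ⟨S, by simp [Finset.mem_filter, Finset.mem_powerset, h.1, h]⟩
  obtain ⟨T, hT, hmax⟩ := Finset.exists_max_image _ Finset.card hne
  simp only [Finset.mem_filter, Finset.mem_powerset] at hT
  refine ⟨T, hT.2.2, hT.2.1, ?_⟩
  intro T' hT' hsub
  apply Finset.eq_of_subset_of_card_le hsub
  exact hmax T' (by simp [Finset.mem_filter, Finset.mem_powerset, hT'.1, hT',
    hT.2.2.trans hsub])

lemma shellableOn_congr {G G' : SimpleGraph V} {A A' : Finset V}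
    (h : ∀ S, IsMaxIndepIn G A S ↔ IsMaxIndepIn G' A' S) :
    ShellableOn G A → ShellableOn G' A' := by
  rintro ⟨t, F, h1, h2, h3⟩
  exact ⟨t, F, h1, fun S => ((h S).symm.trans (h2 S)), h3⟩

lemma shellableOn_link (H : SimpleGraph V) (A S₀ A' : Finset V)
    (hind : IsIndepIn H A S₀)
    (hA' : ∀ y, y ∈ A' ↔ y ∈ A ∧ y ∉ S₀ ∧ ∀ s ∈ S₀, ¬H.Adj s y)
    (hsh : ShellableOn H A) : ShellableOn H A' := by
  classical
  obtain ⟨t, F, hFinj, hFfac, hFshell⟩ := hsh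
  have hdisj : ∀ T, T ⊆ A' → Disjoint T S₀ := by
    intro T hT
    refine Finset.disjoint_left.mpr fun u hu hus => ?_
    exact ((hA' u).mp (hT hu)).2.1 hus
  -- union with S₀ of an independent set of A' is independent in A
  have hunion_ind : ∀ T, T ⊆ A' → (∀ u ∈ T, ∀ v ∈ T, ¬H.Adj u v) →
      IsIndepIn H A (T ∪ S₀) := by
    intro T hTA hTind
    constructor
    · intro u hu
      rcases Finset.mem_union.mp hu with h | h
      · exact ((hA' u).mp (hTA h)).1
      · exact hind.1 h
    · intro u hu v hv
      rcases Finset.mem_union.mp hu with hu | hu <;> rcases Finset.mem_union.mp hv with hv | hv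
      · exact hTind u hu v hv
      · intro hadj; exact ((hA' u).mp (hTA hu)).2.2 v hv hadj.symm
      · intro hadj; exact ((hA' v).mp (hTA hv)).2.2 u hu hadj
      · exact hind.2 u hu v hv
  -- M \ S₀ lands in A' for M independent in A containing S₀
  have hsdiff_sub : ∀ M, IsIndepIn H A M → S₀ ⊆ M → M \ S₀ ⊆ A' := by
    intro M hM hS₀M z hz
    rw [Finset.mem_sdiff] at hz
    refine (hA' z).mpr ⟨hM.1 hz.1, hz.2, fun s hs => hM.2 s (hS₀M hs) z hz.1⟩
  have hup : ∀ T, IsMaxIndepIn H A' T → IsMaxIndepIn H A (T ∪ S₀) := by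
    rintro T ⟨⟨hTA, hTind⟩, hTmax⟩
    refine ⟨hunion_ind T hTA hTind, ?_⟩
    intro M hM hsub
    have hS₀M : S₀ ⊆ M := (Finset.subset_union_right).trans hsub
    have hMind : IsIndepIn H A' (M \ S₀) :=
      ⟨hsdiff_sub M hM hS₀M, fun u hu v hv =>
        hM.2 u (Finset.mem_sdiff.mp hu).1 v (Finset.mem_sdiff.mp hv).1⟩
    have hTsub : T ⊆ M \ S₀ := by
      intro z hz
      rw [Finset.mem_sdiff]
      exact ⟨(Finset.subset_union_left).trans hsub hz, ((hA' z).mp (hTA hz)).2.1⟩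
    have hTeq := hTmax (M \ S₀) hMind hTsub
    apply Finset.Subset.antisymm hsub
    intro z hz
    by_cases hzS : z ∈ S₀
    · exact Finset.mem_union_right _ hzS
    · exact Finset.mem_union_left _ (hTeq ▸ Finset.mem_sdiff.mpr ⟨hz, hzS⟩)
  have hdown : ∀ M, IsMaxIndepIn H A M → S₀ ⊆ M → IsMaxIndepIn H A' (M \ S₀) := by
    rintro M ⟨hMind, hMmax⟩ hS₀M
    refine ⟨⟨hsdiff_sub M hMind hS₀M, fun u hu v hv =>
      hMind.2 u (Finset.mem_sdiff.mp hu).1 v (Finset.mem_sdiff.mp hv).1⟩, ?_⟩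
    intro T' hT' hsub
    have hT'ind : IsIndepIn H A (T' ∪ S₀) := hunion_ind T' hT'.1 hT'.2
    have hMsub : M ⊆ T' ∪ S₀ := by
      intro z hz
      by_cases hzS : z ∈ S₀
      · exact Finset.mem_union_right _ hzS
      · exact Finset.mem_union_left _ (hsub (Finset.mem_sdiff.mpr ⟨hz, hzS⟩))
    have hMeq := hMmax (T' ∪ S₀) hT'ind hMsub
    apply Finset.Subset.antisymm hsub
    intro z hz
    rw [Finset.mem_sdiff]
    refine ⟨hMeq ▸ Finset.mem_union_left _ hz, ((hA' z).mp (hT'.1 hz)).2.1⟩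
  set s : Finset (Fin t) := Finset.univ.filter (fun i => S₀ ⊆ F i) with hs
  have hmem_s : ∀ j, j ∈ s ↔ S₀ ⊆ F j := by intro j; simp [hs]
  let e : Fin s.card ≃o {j // j ∈ s} := s.orderIsoOfFin rfl
  have hmono : ∀ a b : Fin s.card, ((e a : Fin t) < (e b : Fin t)) ↔ a < b := by
    intro a b
    rw [Subtype.coe_lt_coe, e.lt_iff_lt]
  have hS₀F : ∀ k : Fin s.card, S₀ ⊆ F (e k) := fun k => (hmem_s _).mp (e k).2
  refine ⟨s.card, fun k => F (e k) \ S₀, ?_, ?_, ?_⟩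
  · intro k l h
    have h' := congrArg (· ∪ S₀) h
    simp only [Finset.sdiff_union_of_subset (hS₀F k),
      Finset.sdiff_union_of_subset (hS₀F l)] at h'
    exact e.injective (Subtype.coe_injective (hFinj h'))
  · intro S
    constructor
    · intro hS
      obtain ⟨j, hj⟩ := (hFfac (S ∪ S₀)).mp (hup S hS)
      have hjs : j ∈ s := (hmem_s j).mpr (hj ▸ Finset.subset_union_right)
      refine ⟨e.symm ⟨j, hjs⟩, ?_⟩
      have hcoe : ((e (e.symm ⟨j, hjs⟩) : {j // j ∈ s}) : Fin t) = j := by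
        rw [e.apply_symm_apply]
      dsimp only
      rw [hcoe, hj, Finset.union_sdiff_cancel_right (hdisj S hS.1.1)]
    · rintro ⟨k, rfl⟩
      exact hdown (F (e k)) ((hFfac _).mpr ⟨(e k), rfl⟩) (hS₀F k)
  · rintro k S hSk ⟨l, hlk, hSl⟩
    have hSdisj : ∀ z ∈ S, z ∉ S₀ := fun z hz => (Finset.mem_sdiff.mp (hSk hz)).2
    have h1 : S ∪ S₀ ⊆ F (e k) :=
      Finset.union_subset (hSk.trans Finset.sdiff_subset) (hS₀F k)
    have h2 : ∃ j, j < (e k : Fin t) ∧ S ∪ S₀ ⊆ F j :=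
      ⟨(e l : Fin t), (hmono l k).mpr hlk,
        Finset.union_subset (hSl.trans Finset.sdiff_subset) (hS₀F l)⟩
    obtain ⟨S', hS'1, hS'2, ⟨j, hj1, hj2⟩, hS'card⟩ := hFshell (e k) (S ∪ S₀) h1 h2
    have hS₀S' : S₀ ⊆ S' := (Finset.subset_union_right).trans hS'1
    have hjs : j ∈ s := (hmem_s j).mpr (hS₀S'.trans hj2)
    set k' := e.symm ⟨j, hjs⟩ with hk'
    have hcoe : ((e k' : {j // j ∈ s}) : Fin t) = j := by
      rw [hk', e.apply_symm_apply]
    have hk'k : k' < k := by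
      rw [← hmono, hcoe]; exact hj1
    refine ⟨S' \ S₀, ?_, Finset.sdiff_subset_sdiff hS'2 (le_refl S₀),
      ⟨k', hk'k, ?_⟩, ?_⟩
    · intro z hz
      exact Finset.mem_sdiff.mpr ⟨hS'1 (Finset.mem_union_left _ hz), hSdisj z hz⟩
    · dsimp only
      rw [hcoe]
      exact Finset.sdiff_subset_sdiff hj2 (le_refl S₀)
    · dsimp only
      have hc1 : (S' \ S₀).card = S'.card - S₀.card := Finset.card_sdiff_of_subset hS₀S'
      have hc2 : (F (e k) \ S₀).card = (F (e k)).card - S₀.card :=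
        Finset.card_sdiff_of_subset (hS₀F k)
      have hle1 : S₀.card ≤ S'.card := Finset.card_le_card hS₀S'
      have hle2 : S'.card ≤ (F (e k)).card := Finset.card_le_card hS'2
      omega

/-- If the attachment graph `G(G_1, …, G_n)` is shellable, then each `Gs i`
is shellable. -/
theorem stmt_3 {V : Type*} [DecidableEq V] (n : ℕ) (x : Fin n → V) (B : Fin n → Finset V)
    (G : SimpleGraph V) (Gs : Fin n → SimpleGraph V)
    (hxinj : Function.Injective x)
    (hGsupp : ∀ u v, G.Adj u v → (∃ i, u = x i) ∧ (∃ j, v = x j))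
    (hxB : ∀ i, x i ∈ B i)
    (hBcard : ∀ i, 2 ≤ (B i).card)
    (hBdisj : ∀ i j, i ≠ j → Disjoint (B i) (B j))
    (hGssupp : ∀ i, ∀ u v, (Gs i).Adj u v → u ∈ B i ∧ v ∈ B i)
    (hconn : ∀ i, ((Gs i).induce ((B i : Set V))).Connected)
    (hsh : ShellableOn (G ⊔ ⨆ i, Gs i) (Finset.univ.biUnion B)) :
    ∀ i, ShellableOn (Gs i) (B i) := by
  classical
  intro i
  set H := G ⊔ ⨆ i, Gs i with hH
  set A := Finset.univ.biUnion B with hA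
  have hHadj : ∀ u v, H.Adj u v ↔ G.Adj u v ∨ ∃ l, (Gs l).Adj u v := by
    intro u v; simp [hH]
  have hBloc : ∀ {u : V} {j k : Fin n}, u ∈ B j → u ∈ B k → j = k := by
    intro u j k hj hk
    by_contra hne
    exact Finset.disjoint_left.mp (hBdisj j k hne) hj hk
  -- every x j has a neighbor in Gs j
  have hnbr : ∀ j, ∃ y, (Gs j).Adj (x j) y := by
    intro j
    have h2 := hBcard j
    have hne : ((B j).erase (x j)).Nonempty := by
      rw [← Finset.card_pos, Finset.card_erase_of_mem (hxB j)]; omega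
    obtain ⟨z, hz⟩ := hne
    have hzB : z ∈ B j := Finset.mem_of_mem_erase hz
    have hzx : z ≠ x j := Finset.ne_of_mem_erase hz
    obtain ⟨w⟩ := (hconn j).preconnected ⟨x j, by simp [hxB j]⟩ ⟨z, by simp [hzB]⟩
    have hne' : (⟨x j, by simp [hxB j]⟩ : (B j : Set V)) ≠ ⟨z, by simp [hzB]⟩ := by
      intro h
      exact hzx (congrArg Subtype.val h).symm
    have hadj := w.adj_snd (SimpleGraph.Walk.not_nil_of_ne hne')
    exact ⟨((w.getVert 1 : (B j : Set V)) : V), hadj⟩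
  choose y hy using hnbr
  have hyB : ∀ j, y j ∈ B j := fun j => (hGssupp j _ _ (hy j)).2
  have hyx : ∀ j, y j ≠ x j := fun j h => (hy j).ne h.symm
  -- maximal independent sets of Gs j on B j \ {x j} containing y j
  have hTex : ∀ j, ∃ T, y j ∈ T ∧ IsMaxIndepIn (Gs j) ((B j).erase (x j)) T := by
    intro j
    have hsing : IsIndepIn (Gs j) ((B j).erase (x j)) {y j} := by
      constructor
      · intro u hu
        rw [Finset.mem_singleton] at hu; subst hu
        exact Finset.mem_erase.mpr ⟨hyx j, hyB j⟩
      · intro u hu v hv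
        rw [Finset.mem_singleton] at hu hv; subst hu; subst hv
        exact (Gs j).irrefl
    obtain ⟨T, hsub, hmax⟩ := exists_maxIndep_extend (Gs j) ((B j).erase (x j)) {y j} hsing
    exact ⟨T, hsub (Finset.mem_singleton_self _), hmax⟩
  choose T hyT hTmax using hTex
  have hTsub : ∀ j, T j ⊆ (B j).erase (x j) := fun j => (hTmax j).1.1
  have hTB : ∀ j u, u ∈ T j → u ∈ B j ∧ u ≠ x j := fun j u hu =>
    ⟨Finset.mem_of_mem_erase (hTsub j hu), Finset.ne_of_mem_erase (hTsub j hu)⟩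
  have hTnoG : ∀ j u, u ∈ T j → ∀ v, ¬G.Adj u v := by
    intro j u hu v hadj
    obtain ⟨⟨a, ha⟩, -⟩ := hGsupp u v hadj
    have haj : a = j := hBloc (ha ▸ hxB a) (hTB j u hu).1
    exact (hTB j u hu).2 (ha.trans (congrArg x haj))
  set S₀ := (Finset.univ.erase i).biUnion T with hS₀
  have hS₀mem : ∀ u, u ∈ S₀ ↔ ∃ j, j ≠ i ∧ u ∈ T j := by
    intro u
    simp only [hS₀, Finset.mem_biUnion, Finset.mem_erase, Finset.mem_univ, and_true]
  have hS₀ind : IsIndepIn H A S₀ := by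
    constructor
    · intro u hu
      obtain ⟨j, -, hj⟩ := (hS₀mem u).mp hu
      exact Finset.mem_biUnion.mpr ⟨j, Finset.mem_univ j, (hTB j u hj).1⟩
    · intro u hu v hv hadj
      obtain ⟨j, hji, hj⟩ := (hS₀mem u).mp hu
      obtain ⟨k, hki, hk⟩ := (hS₀mem v).mp hv
      rcases (hHadj u v).mp hadj with hG | ⟨l, hl⟩
      · exact hTnoG j u hj v hG
      · have hlj : l = j := hBloc (hGssupp l u v hl).1 (hTB j u hj).1
        have hlk : l = k := hBloc (hGssupp l u v hl).2 (hTB k v hk).1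
        subst hlj
        exact (hTmax l).1.2 u hj v (hlk ▸ hk) hl
  have hA'char : ∀ z, z ∈ B i ↔ z ∈ A ∧ z ∉ S₀ ∧ ∀ s ∈ S₀, ¬H.Adj s z := by
    intro z
    constructor
    · intro hz
      refine ⟨Finset.mem_biUnion.mpr ⟨i, Finset.mem_univ i, hz⟩, ?_, ?_⟩
      · intro hzS
        obtain ⟨j, hji, hj⟩ := (hS₀mem z).mp hzS
        exact hji (hBloc (hTB j z hj).1 hz)
      · intro s hs hadj
        obtain ⟨j, hji, hj⟩ := (hS₀mem s).mp hs
        rcases (hHadj s z).mp hadj with hG | ⟨l, hl⟩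
        · exact hTnoG j s hj z hG
        · have hlj : l = j := hBloc (hGssupp l s z hl).1 (hTB j s hj).1
          have hli : l = i := hBloc (hGssupp l s z hl).2 hz
          exact hji (hlj ▸ hli)
    · rintro ⟨hzA, hzS, hznadj⟩
      obtain ⟨j, -, hzB⟩ := Finset.mem_biUnion.mp hzA
      by_cases hji : j = i
      · exact hji ▸ hzB
      · exfalso
        by_cases hzx : z = x j
        · have hyS : y j ∈ S₀ := (hS₀mem (y j)).mpr ⟨j, hji, hyT j⟩
          refine hznadj (y j) hyS ((hHadj _ _).mpr (Or.inr ⟨j, ?_⟩))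
          rw [hzx]
          exact (hy j).symm
        · by_cases hzT : z ∈ T j
          · exact hzS ((hS₀mem z).mpr ⟨j, hji, hzT⟩)
          · by_cases hadj : ∃ s ∈ T j, (Gs j).Adj s z
            · obtain ⟨s, hs, hadj⟩ := hadj
              exact hznadj s ((hS₀mem s).mpr ⟨j, hji, hs⟩)
                ((hHadj _ _).mpr (Or.inr ⟨j, hadj⟩))
            · push_neg at hadj
              have hins : IsIndepIn (Gs j) ((B j).erase (x j)) (insert z (T j)) := by
                constructor
                · intro u hu
                  rcases Finset.mem_insert.mp hu with rfl | hu
                  · exact Finset.mem_erase.mpr ⟨hzx, hzB⟩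
                  · exact hTsub j hu
                · intro u hu v hv
                  rcases Finset.mem_insert.mp hu with hu' | hu' <;>
                    rcases Finset.mem_insert.mp hv with hv' | hv'
                  · subst hu'; subst hv'; exact (Gs j).irrefl
                  · subst hu'; intro h; exact hadj v hv' h.symm
                  · subst hv'; exact hadj u hu'
                  · exact (hTmax j).1.2 u hu' v hv'
              have := (hTmax j).2 (insert z (T j)) hins (Finset.subset_insert _ _)
              exact hzT (this ▸ Finset.mem_insert_self z (T j))
  have hshB : ShellableOn H (B i) := shellableOn_link H A S₀ (B i) hS₀ind hA'char hsh
  -- on B i, H agrees with Gs i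
  have hadjiff : ∀ u v, u ∈ B i → v ∈ B i → (H.Adj u v ↔ (Gs i).Adj u v) := by
    intro u v hu hv
    rw [hHadj]
    constructor
    · rintro (hG | ⟨l, hl⟩)
      · obtain ⟨⟨a, ha⟩, ⟨b, hb⟩⟩ := hGsupp u v hG
        have hai : a = i := hBloc (ha ▸ hxB a) hu
        have hbi : b = i := hBloc (hb ▸ hxB b) hv
        exact absurd (ha.trans ((congrArg x (hai.trans hbi.symm)).trans hb.symm)) hG.ne
      · have hli : l = i := hBloc (hGssupp l u v hl).1 hu
        exact hli ▸ hl
    · intro h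
      exact Or.inr ⟨i, h⟩
  have hindiff : ∀ S, IsIndepIn H (B i) S ↔ IsIndepIn (Gs i) (B i) S := by
    intro S
    constructor
    · rintro ⟨h1, h2⟩
      exact ⟨h1, fun u hu v hv h => h2 u hu v hv ((hadjiff u v (h1 hu) (h1 hv)).mpr h)⟩
    · rintro ⟨h1, h2⟩
      exact ⟨h1, fun u hu v hv h => h2 u hu v hv ((hadjiff u v (h1 hu) (h1 hv)).mp h)⟩
  refine shellableOn_congr (fun S => ?_) hshB
  constructor
  · rintro ⟨h1, h2⟩
    exact ⟨(hindiff S).mp h1, fun T' hT' hsub => h2 T' ((hindiff T').mpr hT') hsub⟩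
  · rintro ⟨h1, h2⟩
    exact ⟨(hindiff S).mpr h1, fun T' hT' hsub => h2 T' ((hindiff T').mp hT') hsub⟩
end

section
/- Let G be a finite simple graph on vertex set {x_{11}, …, x_{n1}} and for each i = 1, …, n let G_i be a cycle graph of length 5 containing the vertex x_{i1}. Then the attachment graph G(G_1, …, G_n), obtained by attaching a 5-cycle to each vertex of G, is vertex decomposable. -/
variable {V : Type*} [DecidableEq V]

section Abstract

variable {V : Type*} [DecidableEq V]

/-- adjacency relation of the standard 5-cycle on labels -/
def cycAdj (k l : Fin 5) : Prop := k - l = 1 ∨ l - k = 1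

instance (k l : Fin 5) : Decidable (cycAdj k l) := by unfold cycAdj; infer_instance

variable {n : ℕ}

/-- the surviving vertex set determined by a state `σ` -/
def Aset (c : Fin n → Fin 5 → V) (σ : Fin n → Finset (Fin 5)) : Finset V :=
  Finset.univ.biUnion fun i => (σ i).image (c i)

lemma mem_Aset {c : Fin n → Fin 5 → V} {σ : Fin n → Finset (Fin 5)} {v : V} :
    v ∈ Aset c σ ↔ ∃ i, ∃ k ∈ σ i, c i k = v := by
  simp [Aset]

/-- the family of allowed states -/
def Fam : Finset (Finset (Fin 5)) :=
  {Finset.univ, {0,1,2,4}, {0,1}, {0,4}, {0,2,4}, {2,4}, {1}, {2}, {4}, ∅}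

section
variable {H : SimpleGraph V} {c : Fin n → Fin 5 → V}
variable (hcinj : ∀ i k j l, c i k = c j l → i = j ∧ k = l)
variable (hsame : ∀ i k l, H.Adj (c i k) (c i l) ↔ cycAdj k l)
variable (hdiff : ∀ i j k l, i ≠ j → H.Adj (c i k) (c j l) → k = 0 ∧ l = 0)

include hcinj in
lemma c_mem_Aset {σ : Fin n → Finset (Fin 5)} {i : Fin n} {k : Fin 5} :
    c i k ∈ Aset c σ ↔ k ∈ σ i := by
  rw [mem_Aset]
  constructor
  · rintro ⟨j, l, hl, he⟩
    obtain ⟨rfl, rfl⟩ := hcinj _ _ _ _ he.symm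
    exact hl
  · exact fun h => ⟨i, k, h, rfl⟩

lemma del_subset_erase (H : SimpleGraph V) (A : Finset V) (x : V) :
    delClosedNbhd H A x ⊆ A.erase x := by
  classical
  intro v hv
  simp only [delClosedNbhd, Finset.mem_filter] at hv
  exact Finset.mem_erase.2 ⟨hv.2.1, hv.1⟩

include hcinj in
lemma erase_Aset (σ : Fin n → Finset (Fin 5)) (i : Fin n) (k0 : Fin 5) :
    (Aset c σ).erase (c i k0) =
      Aset c (fun j => if j = i then (σ i).erase k0 else σ j) := by
  ext v
  simp only [Finset.mem_erase, mem_Aset]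
  constructor
  · rintro ⟨hne, j, k, hk, rfl⟩
    refine ⟨j, k, ?_, rfl⟩
    by_cases hji : j = i
    · subst hji
      simp only [eq_self_iff_true, if_true, if_pos rfl, Finset.mem_erase]
      exact ⟨fun h => hne (by rw [h]), hk⟩
    · simp [hji, hk]
  · rintro ⟨j, k, hk, rfl⟩
    by_cases hji : j = i
    · subst hji
      simp only [eq_self_iff_true, if_true, if_pos rfl, Finset.mem_erase] at hk
      exact ⟨fun h => hk.1 (hcinj _ _ _ _ h).2, j, k, hk.2, rfl⟩
    · simp only [if_neg hji] at hk
      exact ⟨fun h => hji (hcinj _ _ _ _ h).1, j, k, hk, rfl⟩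

include hcinj hsame hdiff in
lemma del_Aset_ne_zero (σ : Fin n → Finset (Fin 5)) (i : Fin n) (k0 : Fin 5) (hk0 : k0 ≠ 0) :
    delClosedNbhd H (Aset c σ) (c i k0) =
      Aset c (fun j => if j = i then (σ i).filter (fun k => ¬(k = k0 ∨ cycAdj k0 k)) else σ j) := by
  classical
  ext v
  simp only [delClosedNbhd, Finset.mem_filter, mem_Aset]
  constructor
  · rintro ⟨⟨j, k, hk, rfl⟩, hne, hnadj⟩
    refine ⟨j, k, ?_, rfl⟩
    by_cases hji : j = i
    · subst hji
      simp only [eq_self_iff_true, if_true, if_pos rfl, Finset.mem_filter]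
      refine ⟨hk, ?_⟩
      rintro (rfl | hcyc)
      · exact hne rfl
      · exact hnadj ((hsame j k0 k).2 hcyc)
    · simp [hji, hk]
  · rintro ⟨j, k, hk, rfl⟩
    by_cases hji : j = i
    · subst hji
      simp only [eq_self_iff_true, if_true, if_pos rfl, Finset.mem_filter] at hk
      push_neg at hk
      refine ⟨⟨j, k, hk.1, rfl⟩, fun h => hk.2.1 (hcinj _ _ _ _ h).2, fun hadj => ?_⟩
      exact hk.2.2 ((hsame j k0 k).1 hadj)
    · simp only [if_neg hji] at hk
      refine ⟨⟨j, k, hk, rfl⟩, fun h => hji (hcinj _ _ _ _ h).1, fun hadj => ?_⟩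
      exact hk0 (hdiff i j k0 k (fun h => hji h.symm) hadj).1

include hcinj hsame hdiff in
open scoped Classical in
lemma del_Aset_zero (σ : Fin n → Finset (Fin 5)) (i : Fin n) :
    delClosedNbhd H (Aset c σ) (c i 0) =
      Aset c (fun j => if j = i then (σ i).filter (fun k => ¬(k = 0 ∨ cycAdj 0 k))
        else if H.Adj (c i 0) (c j 0) then (σ j).erase 0 else σ j) := by
  ext v
  simp only [delClosedNbhd, Finset.mem_filter, mem_Aset]
  constructor
  · rintro ⟨⟨j, k, hk, rfl⟩, hne, hnadj⟩
    refine ⟨j, k, ?_, rfl⟩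
    by_cases hji : j = i
    · subst hji
      simp only [eq_self_iff_true, if_true, if_pos rfl, Finset.mem_filter]
      refine ⟨hk, ?_⟩
      rintro (rfl | hcyc)
      · exact hne rfl
      · exact hnadj ((hsame j 0 k).2 hcyc)
    · simp only [if_neg hji]
      by_cases hadj : H.Adj (c i 0) (c j 0)
      · simp only [if_pos hadj, Finset.mem_erase]
        refine ⟨fun hk0 => ?_, hk⟩
        subst hk0; exact hnadj hadj
      · simp [hadj, hk]
  · rintro ⟨j, k, hk, rfl⟩
    by_cases hji : j = i
    · subst hji
      simp only [eq_self_iff_true, if_true, if_pos rfl, Finset.mem_filter] at hk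
      push_neg at hk
      refine ⟨⟨j, k, hk.1, rfl⟩, fun h => hk.2.1 (hcinj _ _ _ _ h).2, fun hadj => ?_⟩
      exact hk.2.2 ((hsame j 0 k).1 hadj)
    · simp only [if_neg hji] at hk
      have hkσ : k ∈ σ j := by
        by_cases hadj : H.Adj (c i 0) (c j 0)
        · simp only [if_pos hadj, Finset.mem_erase] at hk; exact hk.2
        · simpa [hadj] using hk
      refine ⟨⟨j, k, hkσ, rfl⟩, fun h => hji (hcinj _ _ _ _ h).1, fun hadj => ?_⟩
      have hkk := (hdiff i j 0 k (fun h => hji h.symm) hadj).2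
      subst hkk
      rw [if_pos hadj] at hk
      exact absurd rfl (Finset.mem_erase.1 hk).1

end
end Abstract

section Abstract2

variable {V : Type*} [DecidableEq V] {n : ℕ}
variable {H : SimpleGraph V} {c : Fin n → Fin 5 → V}

lemma indep_insert_s5 {A' S : Finset V} {y : V} (hy : y ∈ A') (hS : S ⊆ A')
    (hind : ∀ u ∈ S, ∀ v ∈ S, ¬H.Adj u v) (hyS : ∀ u ∈ S, ¬H.Adj y u) :
    IsIndepIn H A' (insert y S) := by
  refine ⟨Finset.insert_subset hy hS, ?_⟩
  intro u hu v hv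
  rcases Finset.mem_insert.1 hu with rfl | hu' <;> rcases Finset.mem_insert.1 hv with rfl | hv'
  · exact fun h => H.irrefl h
  · exact hyS v hv'
  · exact fun h => hyS u hu' h.symm
  · exact hind u hu' v hv'

lemma fam_erase_zero : ∀ s ∈ Fam, s ≠ Finset.univ → s ≠ ({0,1,2,4} : Finset (Fin 5)) →
    s.erase 0 ∈ Fam := by decide

lemma fam_no_adj : ∀ s ∈ Fam, (0 : Fin 5) ∉ s → ∀ k ∈ s, ∀ l ∈ s, ¬cycAdj k l := by decide

variable (hcinj : ∀ i k j l, c i k = c j l → i = j ∧ k = l)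
variable (hsame : ∀ i k l, H.Adj (c i k) (c i l) ↔ cycAdj k l)
variable (hdiff : ∀ i j k l, i ≠ j → H.Adj (c i k) (c j l) → k = 0 ∧ l = 0)

include hcinj hsame hdiff in
open scoped Classical in
lemma case_zero (N : ℕ)
    (IH : ∀ σ : Fin n → Finset (Fin 5), (∀ i, σ i ∈ Fam) → (Aset c σ).card ≤ N →
      VertexDecomposableOn H (Aset c σ))
    (σ : Fin n → Finset (Fin 5)) (hval : ∀ i, σ i ∈ Fam) (hcard : (Aset c σ).card ≤ N + 1)
    (h1 : ∀ j, σ j ≠ Finset.univ) (h2 : ∀ j, σ j ≠ ({0,1,2,4} : Finset (Fin 5)))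
    (i : Fin n) (s t : Finset (Fin 5)) (w : Fin 5)
    (hσi : σ i = s)
    (hfilv : s.filter (fun k => ¬(k = 0 ∨ cycAdj 0 k)) = t)
    (ht : t ∈ Fam) (hterase : s.erase 0 ∈ Fam)
    (hw : w ∈ s) (h0s : (0 : Fin 5) ∈ s) (hadj0w : cycAdj 0 w) (hwne : w ≠ 0)
    (hwt : ∀ k ∈ t, ¬cycAdj w k) :
    VertexDecomposableOn H (Aset c σ) := by
  have hx : c i 0 ∈ Aset c σ := (c_mem_Aset hcinj).2 (by rw [hσi]; exact h0s)
  have hD := del_Aset_zero hcinj hsame hdiff σ i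
  rw [hσi, hfilv] at hD
  have hE := erase_Aset (c := c) hcinj σ i 0
  have hsubD : Aset c (fun j => if j = i then t
      else if H.Adj (c i 0) (c j 0) then (σ j).erase 0 else σ j) ⊆
      (Aset c σ).erase (c i 0) := by
    rw [← hD]; exact del_subset_erase H _ _
  have hcardE : ((Aset c σ).erase (c i 0)).card ≤ N := by
    rw [Finset.card_erase_of_mem hx]; omega
  refine VertexDecomposableOn.shed _ (c i 0) hx ?_ ?_ ?_
  · rw [hD]
    refine IH _ (fun j => ?_) (le_trans (Finset.card_le_card hsubD) hcardE)
    split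
    · exact ht
    · split
      · exact fam_erase_zero _ (hval j) (h1 j) (h2 j)
      · exact hval j
  · rw [hE]
    refine IH _ (fun j => ?_) (hE ▸ hcardE)
    split
    · rw [hσi]; exact hterase
    · exact hval j
  · intro S hS
    rw [hD] at hS
    obtain ⟨hSsub, hSind⟩ := hS
    have hSsub' : S ⊆ (Aset c σ).erase (c i 0) := hSsub.trans hsubD
    refine ⟨c i w, (c_mem_Aset hcinj).2 (by rw [hσi]; exact hw),
      (hsame i 0 w).2 hadj0w, ?_⟩
    refine indep_insert_s5 (Finset.mem_erase.2 ⟨fun h => hwne (hcinj _ _ _ _ h).2,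
      (c_mem_Aset hcinj).2 (by rw [hσi]; exact hw)⟩) hSsub' hSind ?_
    intro u hu
    obtain ⟨j, k, hk, rfl⟩ := mem_Aset.1 (hSsub hu)
    by_cases hji : j = i
    · subst hji
      simp only [eq_self_iff_true, if_true] at hk
      intro hadj
      exact hwt k hk ((hsame j w k).1 hadj)
    · intro hadj
      exact hwne (hdiff i j w k (fun h => hji h.symm) hadj).1

include hcinj hsame hdiff in
lemma main_lemma : ∀ (N : ℕ) (σ : Fin n → Finset (Fin 5)), (∀ i, σ i ∈ Fam) →
    (Aset c σ).card ≤ N → VertexDecomposableOn H (Aset c σ) := by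
  intro N
  induction N with
  | zero =>
    intro σ _ hcard
    have : Aset c σ = ∅ := Finset.card_eq_zero.1 (Nat.le_zero.1 hcard)
    rw [this]
    exact .edgeless ∅ (by simp)
  | succ N IH =>
    intro σ hval hcard
    by_cases h1 : ∃ i, σ i = Finset.univ
    · -- shed c i 3
      obtain ⟨i, hσi⟩ := h1
      have hx : c i 3 ∈ Aset c σ := (c_mem_Aset hcinj).2 (by rw [hσi]; exact Finset.mem_univ _)
      have hD := del_Aset_ne_zero hcinj hsame hdiff σ i 3 (by decide)
      have hfil : (σ i).filter (fun k => ¬(k = 3 ∨ cycAdj 3 k)) = {0,1} := by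
        rw [hσi]; decide
      rw [hfil] at hD
      have hE := erase_Aset (c := c) hcinj σ i 3
      have her : (σ i).erase 3 = {0,1,2,4} := by rw [hσi]; decide
      rw [her] at hE
      have hsubD : Aset c (fun j => if j = i then ({0,1} : Finset (Fin 5)) else σ j) ⊆
          (Aset c σ).erase (c i 3) := by
        rw [← hD]; exact del_subset_erase H _ _
      have hcardE : ((Aset c σ).erase (c i 3)).card ≤ N := by
        rw [Finset.card_erase_of_mem hx]; omega
      refine VertexDecomposableOn.shed _ (c i 3) hx ?_ ?_ ?_
      · rw [hD]
        refine IH _ (fun j => ?_) (le_trans (Finset.card_le_card hsubD) hcardE)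
        split
        · decide
        · exact hval j
      · rw [hE]
        refine IH _ (fun j => ?_) (hE ▸ hcardE)
        split
        · decide
        · exact hval j
      · intro S hS
        rw [hD] at hS
        obtain ⟨hSsub, hSind⟩ := hS
        have hSsub' : S ⊆ (Aset c σ).erase (c i 3) := hSsub.trans hsubD
        by_cases h0 : c i 0 ∈ S
        · refine ⟨c i 2, (c_mem_Aset hcinj).2 (by rw [hσi]; exact Finset.mem_univ _),
            (hsame i 3 2).2 (by decide), ?_⟩
          refine indep_insert_s5 (Finset.mem_erase.2 ⟨fun h => by simpa using (hcinj _ _ _ _ h).2,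
            (c_mem_Aset hcinj).2 (by rw [hσi]; exact Finset.mem_univ _)⟩) hSsub' hSind ?_
          intro u hu
          obtain ⟨j, k, hk, rfl⟩ := mem_Aset.1 (hSsub hu)
          by_cases hji : j = i
          · subst hji
            simp only [eq_self_iff_true, if_true] at hk
            fin_cases hk
            · intro hadj; exact absurd ((hsame j 2 0).1 hadj) (by decide)
            · intro _; exact hSind _ h0 _ hu ((hsame j 0 1).2 (by decide))
          · simp only [if_neg hji] at hk
            intro hadj
            exact absurd (hdiff i j 2 k (fun h => hji h.symm) hadj).1 (by decide)
        · refine ⟨c i 4, (c_mem_Aset hcinj).2 (by rw [hσi]; exact Finset.mem_univ _),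
            (hsame i 3 4).2 (by decide), ?_⟩
          refine indep_insert_s5 (Finset.mem_erase.2 ⟨fun h => by simpa using (hcinj _ _ _ _ h).2,
            (c_mem_Aset hcinj).2 (by rw [hσi]; exact Finset.mem_univ _)⟩) hSsub' hSind ?_
          intro u hu
          obtain ⟨j, k, hk, rfl⟩ := mem_Aset.1 (hSsub hu)
          by_cases hji : j = i
          · subst hji
            simp only [eq_self_iff_true, if_true] at hk
            fin_cases hk
            · intro _; exact h0 hu
            · intro hadj; exact absurd ((hsame j 4 1).1 hadj) (by decide)
          · simp only [if_neg hji] at hk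
            intro hadj
            exact absurd (hdiff i j 4 k (fun h => hji h.symm) hadj).1 (by decide)
    · by_cases h2 : ∃ i, σ i = ({0,1,2,4} : Finset (Fin 5))
      · -- shed c i 1
        obtain ⟨i, hσi⟩ := h2
        have hx : c i 1 ∈ Aset c σ := (c_mem_Aset hcinj).2 (by rw [hσi]; decide)
        have hD := del_Aset_ne_zero hcinj hsame hdiff σ i 1 (by decide)
        have hfil : (σ i).filter (fun k => ¬(k = 1 ∨ cycAdj 1 k)) = {4} := by
          rw [hσi]; decide
        rw [hfil] at hD
        have hE := erase_Aset (c := c) hcinj σ i 1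
        have her : (σ i).erase 1 = {0,2,4} := by rw [hσi]; decide
        rw [her] at hE
        have hsubD : Aset c (fun j => if j = i then ({4} : Finset (Fin 5)) else σ j) ⊆
            (Aset c σ).erase (c i 1) := by
          rw [← hD]; exact del_subset_erase H _ _
        have hcardE : ((Aset c σ).erase (c i 1)).card ≤ N := by
          rw [Finset.card_erase_of_mem hx]; omega
        refine VertexDecomposableOn.shed _ (c i 1) hx ?_ ?_ ?_
        · rw [hD]
          refine IH _ (fun j => ?_) (le_trans (Finset.card_le_card hsubD) hcardE)
          split
          · decide
          · exact hval j
        · rw [hE]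
          refine IH _ (fun j => ?_) (hE ▸ hcardE)
          split
          · decide
          · exact hval j
        · intro S hS
          rw [hD] at hS
          obtain ⟨hSsub, hSind⟩ := hS
          have hSsub' : S ⊆ (Aset c σ).erase (c i 1) := hSsub.trans hsubD
          refine ⟨c i 2, (c_mem_Aset hcinj).2 (by rw [hσi]; decide),
            (hsame i 1 2).2 (by decide), ?_⟩
          refine indep_insert_s5 (Finset.mem_erase.2 ⟨fun h => by simpa using (hcinj _ _ _ _ h).2,
            (c_mem_Aset hcinj).2 (by rw [hσi]; decide)⟩) hSsub' hSind ?_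
          intro u hu
          obtain ⟨j, k, hk, rfl⟩ := mem_Aset.1 (hSsub hu)
          by_cases hji : j = i
          · subst hji
            simp only [eq_self_iff_true, if_true] at hk
            fin_cases hk
            intro hadj; exact absurd ((hsame j 2 4).1 hadj) (by decide)
          · simp only [if_neg hji] at hk
            intro hadj
            exact absurd (hdiff i j 2 k (fun h => hji h.symm) hadj).1 (by decide)
      · by_cases h3 : ∃ i, (0 : Fin 5) ∈ σ i
        · push_neg at h1 h2
          obtain ⟨i, h0i⟩ := h3
          have hcases : σ i = {0,1} ∨ σ i = {0,4} ∨ σ i = ({0,2,4} : Finset (Fin 5)) := by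
            have hf := hval i
            simp only [Fam, Finset.mem_insert, Finset.mem_singleton] at hf
            rcases hf with h|h|h|h|h|h|h|h|h|h
            · exact absurd h (h1 i)
            · exact absurd h (h2 i)
            · exact Or.inl h
            · exact Or.inr (Or.inl h)
            · exact Or.inr (Or.inr h)
            all_goals (rw [h] at h0i; exact absurd h0i (by decide))
          rcases hcases with hσi | hσi | hσi
          · exact case_zero hcinj hsame hdiff N IH σ hval hcard h1 h2 i _ ∅ 1 hσi
              (by decide) (by decide) (by decide) (by decide) (by decide) (by decide)
              (by decide) (by decide)
          · exact case_zero hcinj hsame hdiff N IH σ hval hcard h1 h2 i _ ∅ 4 hσi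
              (by decide) (by decide) (by decide) (by decide) (by decide) (by decide)
              (by decide) (by decide)
          · exact case_zero hcinj hsame hdiff N IH σ hval hcard h1 h2 i _ {2} 4 hσi
              (by decide) (by decide) (by decide) (by decide) (by decide) (by decide)
              (by decide) (by decide)
        · push_neg at h3
          refine VertexDecomposableOn.edgeless _ ?_
          intro u hu v hv hadj
          obtain ⟨i, k, hk, rfl⟩ := mem_Aset.1 hu
          obtain ⟨j, l, hl, rfl⟩ := mem_Aset.1 hv
          by_cases hij : i = j
          · subst hij
            exact fam_no_adj _ (hval i) (h3 i) k hk l hl ((hsame i k l).1 hadj)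
          · have hk0 := (hdiff i j k l hij hadj).1
            rw [hk0] at hk
            exact h3 i hk

end Abstract2

/-- Attaching a `5`-cycle to each vertex of `G` yields a vertex
decomposable graph. -/
theorem stmt_5 {V : Type*} [DecidableEq V] (n : ℕ) (x : Fin n → V) (B : Fin n → Finset V)
    (G : SimpleGraph V) (Gs : Fin n → SimpleGraph V)
    (hxinj : Function.Injective x)
    (hGsupp : ∀ u v, G.Adj u v → (∃ i, u = x i) ∧ (∃ j, v = x j))
    (hxB : ∀ i, x i ∈ B i)
    (hBdisj : ∀ i j, i ≠ j → Disjoint (B i) (B j))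
    -- each `Gs i` is a cycle graph of length `5` on the vertex set `B i`
    (hcyc : ∀ i, IsCycleGraphOn (Gs i) (B i) 5) :
    VertexDecomposableOn (G ⊔ ⨆ i, Gs i) (Finset.univ.biUnion B) := by
  classical
  have e : ∀ i, (Gs i).induce (B i : Set V) ≃g SimpleGraph.cycleGraph 5 :=
    fun i => (hcyc i).2.some
  set t : Fin n → Fin 5 := fun i => e i ⟨x i, by simpa using hxB i⟩ with ht
  set c : Fin n → Fin 5 → V := fun i k => ((e i).symm (t i + k) : (B i : Set V)).1 with hc
  have hmemB : ∀ i k, c i k ∈ B i := fun i k => by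
    rw [hc]
    exact Finset.mem_coe.1 ((e i).symm (t i + k)).2
  have hc0 : ∀ i, c i 0 = x i := fun i => by
    simp [hc, ht]
  have hkinj : ∀ i k l, c i k = c i l → k = l := by
    intro i k l h
    have h2 : (e i).symm (t i + k) = (e i).symm (t i + l) := Subtype.ext h
    exact add_left_cancel ((e i).symm.injective h2)
  have hBidx : ∀ {a b : Fin n} {v : V}, v ∈ B a → v ∈ B b → a = b := by
    intro a b v h1 h2
    by_contra hne
    exact (Finset.disjoint_left.1 (hBdisj a b hne) h1) h2
  have hcinj : ∀ i k j l, c i k = c j l → i = j ∧ k = l := by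
    intro i k j l h
    have hij : i = j := hBidx (hmemB i k) (by rw [h]; exact hmemB j l)
    subst hij
    exact ⟨rfl, hkinj _ _ _ h⟩
  have hroot : ∀ i k m, c i k = x m → i = m ∧ k = 0 := by
    intro i k m h
    have him : i = m := hBidx (hmemB i k) (by rw [h]; exact hxB m)
    subst him
    refine ⟨rfl, hkinj i k 0 ?_⟩
    rw [h, hc0]
  have hGsAdj : ∀ i k l, (Gs i).Adj (c i k) (c i l) ↔ cycAdj k l := by
    intro i k l
    have h1 : (Gs i).Adj (c i k) (c i l) ↔
        ((Gs i).induce (B i : Set V)).Adj ((e i).symm (t i + k)) ((e i).symm (t i + l)) :=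
      Iff.rfl
    rw [h1, (e i).symm.map_adj_iff]
    have h2 := @SimpleGraph.cycleGraph_adj 3 (t i + k) (t i + l)
    rw [h2]
    have h3 : t i + k - (t i + l) = k - l := by abel
    have h4 : t i + l - (t i + k) = l - k := by abel
    rw [h3, h4]
    rfl
  have hsame : ∀ i k l, (G ⊔ ⨆ i, Gs i).Adj (c i k) (c i l) ↔ cycAdj k l := by
    intro i k l
    rw [SimpleGraph.sup_adj, SimpleGraph.iSup_adj]
    constructor
    · rintro (h | ⟨m, hm⟩)
      · obtain ⟨⟨a, ha⟩, ⟨b, hb⟩⟩ := hGsupp _ _ h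
        obtain ⟨hia, hk0⟩ := hroot i k a ha
        obtain ⟨hib, hl0⟩ := hroot i l b hb
        rw [hk0, hl0] at h
        exact (G.irrefl h).elim
      · have hmem := (hcyc m).1 _ _ hm
        have hmi : m = i := hBidx hmem.1 (hmemB i k)
        subst hmi
        exact (hGsAdj m k l).1 hm
    · intro h
      exact Or.inr ⟨i, (hGsAdj i k l).2 h⟩
  have hdiff : ∀ i j k l, i ≠ j → (G ⊔ ⨆ i, Gs i).Adj (c i k) (c j l) → k = 0 ∧ l = 0 := by
    intro i j k l hij h
    rw [SimpleGraph.sup_adj, SimpleGraph.iSup_adj] at h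
    rcases h with h | ⟨m, hm⟩
    · obtain ⟨⟨a, ha⟩, ⟨b, hb⟩⟩ := hGsupp _ _ h
      exact ⟨(hroot i k a ha).2, (hroot j l b hb).2⟩
    · have hmem := (hcyc m).1 _ _ hm
      have hmi : m = i := hBidx hmem.1 (hmemB i k)
      have hmj : m = j := hBidx hmem.2 (hmemB j l)
      exact absurd (hmi ▸ hmj) hij
  have hset : Finset.univ.biUnion B = Aset c (fun _ => Finset.univ) := by
    ext v
    constructor
    · intro hv0
      obtain ⟨i, -, hv⟩ := Finset.mem_biUnion.1 hv0
      have hv' : v ∈ (B i : Set V) := by simpa using hv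
      refine mem_Aset.2 ⟨i, e i ⟨v, hv'⟩ - t i, Finset.mem_univ _, ?_⟩
      rw [hc]
      show ((e i).symm (t i + (e i ⟨v, hv'⟩ - t i)) : (B i : Set V)).1 = v
      have h5 : t i + (e i ⟨v, hv'⟩ - t i) = e i ⟨v, hv'⟩ := by abel
      rw [h5, RelIso.symm_apply_apply]
    · intro hv0
      obtain ⟨i, k, -, rfl⟩ := mem_Aset.1 hv0
      exact Finset.mem_biUnion.2 ⟨i, Finset.mem_univ _, hmemB i k⟩
  rw [hset]
  exact main_lemma hcinj hsame hdiff _ _ (fun i => by decide) le_rfl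
end
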